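/- arXiv:1205.2841 — 8 statements merged into one kernel-verified Lean document; each statement's English description precedes it below -/
import Mathlib

section
/- Let A = (Q, Σ, Q_f, Δ) be a hedge automaton and i ≥ 1. A macrostate P belongs to Post^i(∅) if and only if there exists a tree t ∈ T(Σ) of height at most i such that P = {q ∈ Q | t →A q}. -/
/-- Unranked trees over alphabet `σ`: a root label and a list of subtrees. -/
inductive UTree (σ : Type) : Type where
  | node : σ → List (UTree σ) → UTree σ

namespace UTree

/-- Linearization of an unranked tree, over `σ ⊕ σ` where `Sum.inl a` is the
opening tag `a` and `Sum.inr a` is the closing tag `ā`. -/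
def lin {σ : Type} : UTree σ → List (σ ⊕ σ)
  | .node a ts => Sum.inl a :: ((ts.attach.map fun x => lin x.1).flatten ++ [Sum.inr a])
decreasing_by simp only [UTree.node.sizeOf_spec]; have := List.sizeOf_lt_of_mem x.2; omega

/-- Height of a tree (number of nodes on the longest branch). -/
def height {σ : Type} : UTree σ → ℕ
  | .node _ ts => ((ts.attach.map fun x => height x.1).foldr max 0) + 1
decreasing_by simp only [UTree.node.sizeOf_spec]; have := List.sizeOf_lt_of_mem x.2; omega

end UTree

/-- Linearization of a hedge (a finite sequence of trees). -/
def linH {σ : Type} (h : List (UTree σ)) : List (σ ⊕ σ) := (h.map UTree.lin).flatten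

/-- `u` is a nonempty proper prefix of the linearization of some tree. -/
def ProperPrefix {σ : Type} (u : List (σ ⊕ σ)) : Prop :=
  ∃ (t : UTree σ) (v : List (σ ⊕ σ)), v ≠ [] ∧ u ++ v = t.lin

/-- A hedge automaton: final states and rules `(a, L, q)` with a horizontal
language `L ⊆ Q*`. -/
structure HedgeAutomaton (σ Q : Type) where
  final : Set Q
  rules : Set (σ × Set (List Q) × Q)

/-- `HEval A t q` holds iff some run of `A` on `t` labels the root of `t` by `q`. -/
inductive HEval {σ Q : Type} (A : HedgeAutomaton σ Q) : UTree σ → Q → Prop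
  | node {a : σ} {ts : List (UTree σ)} {q : Q} {L : Set (List Q)} {qs : List Q} :
      (a, L, q) ∈ A.rules → qs ∈ L → qs.length = ts.length →
      (∀ p ∈ ts.zip qs, HEval A p.1 p.2) → HEval A (UTree.node a ts) q

/-- A tree is accepted if some run labels its root by a final state. -/
def accepted {σ Q : Type} (A : HedgeAutomaton σ Q) (t : UTree σ) : Prop :=
  ∃ q ∈ A.final, HEval A t q

/-- All horizontal languages of `A` are regular. -/
def RegularHA {σ Q : Type} (A : HedgeAutomaton σ Q) : Prop :=
  ∀ r ∈ A.rules, Language.IsRegular (r.2.1 : Language Q)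

/-- The words `p₁⋯pₙ` of a macrostate word `P₁⋯Pₙ`, with `pᵢ ∈ Pᵢ` for all `i`. -/
def wordsOf {Q : Type} (π : List (Set Q)) : Set (List Q) :=
  {w | List.Forall₂ (· ∈ ·) w π}

/-- `Post_a(π)` for a macrostate word `π`. -/
def postA {σ Q : Type} (A : HedgeAutomaton σ Q) (a : σ) (π : List (Set Q)) : Set Q :=
  {q | ∃ L : Set (List Q), (a, L, q) ∈ A.rules ∧ (L ∩ wordsOf π).Nonempty}

/-- The macrostate `P_t = {q | t →A q}` of a tree `t`. -/
def Pt {σ Q : Type} (A : HedgeAutomaton σ Q) (t : UTree σ) : Set Q := {q | HEval A t q}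

/-- The macrostate word `π_h = P_{t₁}⋯P_{tₙ}` of a hedge `h = t₁⋯tₙ`. -/
def pih {σ Q : Type} (A : HedgeAutomaton σ Q) (h : List (UTree σ)) : List (Set Q) :=
  h.map (Pt A)

/-- `Post(M) = {Post_a(π) | a ∈ Σ, π ∈ M*} ∪ M`. -/
def postSet {σ Q : Type} (A : HedgeAutomaton σ Q) (M : Set (Set Q)) : Set (Set Q) :=
  {P | ∃ (a : σ) (π : List (Set Q)), (∀ x ∈ π, x ∈ M) ∧ P = postA A a π} ∪ M

/-- `Post^i(M)`: the `i`-fold iteration of `Post`, with `Post^0(M) = M`. -/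
def postIter {σ Q : Type} (A : HedgeAutomaton σ Q) : ℕ → Set (Set Q) → Set (Set Q)
  | 0, M => M
  | n + 1, M => postSet A (postIter A n M)

lemma UTree.height_node {σ : Type} (a : σ) (ts : List (UTree σ)) :
    (UTree.node a ts).height = (ts.map UTree.height).foldr max 0 + 1 := by
  rw [UTree.height]
  congr 2
  exact List.map_congr_left (fun x hx => rfl) |>.trans List.attach_map_val

lemma UTree.height_pos {σ : Type} (t : UTree σ) : 1 ≤ t.height := by
  cases t with
  | node a ts => rw [UTree.height_node]; omega

lemma foldr_max_le {l : List ℕ} {i : ℕ} (h : ∀ x ∈ l, x ≤ i) : l.foldr max 0 ≤ i := by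
  induction l with
  | nil => simp
  | cons x xs ih =>
    simp only [List.foldr_cons, max_le_iff]
    exact ⟨h x (by simp), ih fun y hy => h y (by simp [hy])⟩

lemma le_foldr_max {l : List ℕ} {x : ℕ} (h : x ∈ l) : x ≤ l.foldr max 0 := by
  induction l with
  | nil => simp at h
  | cons y ys ih =>
    simp only [List.foldr_cons]
    rcases List.mem_cons.mp h with rfl | hy
    · exact le_max_left _ _
    · exact le_trans (ih hy) (le_max_right _ _)

lemma Pt_node {σ Q : Type} (A : HedgeAutomaton σ Q) (a : σ) (ts : List (UTree σ)) :
    Pt A (UTree.node a ts) = postA A a (pih A ts) := by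
  ext q
  constructor
  · rintro ⟨hrule, hL, hlen, hzip⟩
    rename_i L qs
    refine ⟨L, hrule, qs, hL, ?_⟩
    show List.Forall₂ (· ∈ ·) qs (ts.map (Pt A))
    rw [List.forall₂_map_right_iff]
    rw [List.forall₂_iff_zip]
    refine ⟨hlen, fun {x y} hxy => ?_⟩
    refine hzip (y, x) ?_
    have hsw := List.zip_swap qs ts
    exact hsw ▸ List.mem_map.mpr ⟨(x, y), hxy, rfl⟩
  · rintro ⟨L, hrule, qs, hL, hw⟩
    have hf : List.Forall₂ (fun q t => HEval A t q) qs ts := by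
      have : List.Forall₂ (· ∈ ·) qs (ts.map (Pt A)) := hw
      rw [List.forall₂_map_right_iff] at this
      exact this
    rw [List.forall₂_iff_zip] at hf
    obtain ⟨hlen, hz⟩ := hf
    refine HEval.node hrule hL hlen (fun p hp => ?_)
    show HEval A (p.2, p.1).2 (p.2, p.1).1
    apply hz
    have hsw := List.zip_swap ts qs
    exact hsw ▸ List.mem_map.mpr ⟨p, hp, rfl⟩

lemma postIter_succ_superset {σ Q : Type} (A : HedgeAutomaton σ Q) (n : ℕ) :
    postIter A n ∅ ⊆ postIter A (n + 1) ∅ := fun _ hP => Or.inr hP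

lemma postIter_mono {σ Q : Type} (A : HedgeAutomaton σ Q) {n m : ℕ} (h : n ≤ m) :
    postIter A n ∅ ⊆ postIter A m ∅ := by
  induction m with
  | zero => rw [Nat.le_zero.mp h]
  | succ m ih =>
    rcases Nat.lt_or_ge n (m + 1) with hl | hg
    · exact fun P hP => postIter_succ_superset A m (ih (Nat.lt_succ_iff.mp hl) hP)
    · have : n = m + 1 := le_antisymm h hg
      subst this; exact fun _ hP => hP

lemma Pt_mem_postIter {σ Q : Type} (A : HedgeAutomaton σ Q) :
    ∀ (n : ℕ) (t : UTree σ), t.height ≤ n → Pt A t ∈ postIter A n ∅ := by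
  intro n
  induction n with
  | zero => intro t ht; have := UTree.height_pos t; omega
  | succ n ih =>
    rintro ⟨a, ts⟩ ht
    rw [UTree.height_node] at ht
    have hts : ∀ t' ∈ ts, t'.height ≤ n := by
      intro t' ht'
      have := le_foldr_max (List.mem_map.mpr ⟨t', ht', rfl⟩ : t'.height ∈ ts.map UTree.height)
      omega
    refine Or.inl ⟨a, pih A ts, ?_, Pt_node A a ts⟩
    intro x hx
    obtain ⟨t', ht', rfl⟩ := List.mem_map.mp hx
    exact ih t' (hts t' ht')

lemma postIter_mem_Pt {σ Q : Type} (A : HedgeAutomaton σ Q) :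
    ∀ (n : ℕ) (P : Set Q), P ∈ postIter A n ∅ →
      ∃ t : UTree σ, t.height ≤ n ∧ P = Pt A t := by
  intro n
  induction n with
  | zero => intro P hP; exact absurd hP (by simp [postIter])
  | succ n ih =>
    intro P hP
    rcases hP with ⟨a, π, hπ, rfl⟩ | hP
    · have : ∃ ts : List (UTree σ), pih A ts = π ∧ ∀ t ∈ ts, t.height ≤ n := by
        clear a
        induction π with
        | nil => exact ⟨[], rfl, by simp⟩
        | cons x xs ihx =>
          obtain ⟨t, ht, rfl⟩ := ih x (hπ x (by simp))
          obtain ⟨ts, hts, hh⟩ := ihx (fun y hy => hπ y (by simp [hy]))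
          refine ⟨t :: ts, ?_, ?_⟩
          · simp [pih] at hts ⊢; exact hts
          · intro t' ht'
            rcases List.mem_cons.mp ht' with rfl | h
            · exact ht
            · exact hh t' h
      obtain ⟨ts, rfl, hh⟩ := this
      refine ⟨UTree.node a ts, ?_, (Pt_node A a ts).symm⟩
      rw [UTree.height_node]
      have : (ts.map UTree.height).foldr max 0 ≤ n := by
        apply foldr_max_le
        intro x hx
        obtain ⟨t', ht', rfl⟩ := List.mem_map.mp hx
        exact hh t' ht'
      omega
    · obtain ⟨t, ht, hPt⟩ := ih P hP
      exact ⟨t, by omega, hPt⟩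

/-- Lemma 2: for `i ≥ 1`, a macrostate `P` belongs to `Post^i(∅)`
iff there is a tree `t` of height at most `i` with `P = {q | t →A q}`. -/
theorem mem_postIter_iff {σ Q : Type} [Fintype σ] [Fintype Q]
    (A : HedgeAutomaton σ Q) (hfin : A.rules.Finite) (hreg : RegularHA A)
    (i : ℕ) (hi : 1 ≤ i) (P : Set Q) :
    P ∈ postIter A i ∅ ↔ ∃ t : UTree σ, t.height ≤ i ∧ P = Pt A t := by
  constructor
  · exact postIter_mem_Pt A i P
  · rintro ⟨t, ht, rfl⟩
    exact Pt_mem_postIter A i t ht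
end

section
/- A hedge automaton A = (Q, Σ, Q_f, Δ) is universal if and only if for every macrostate P ∈ Post*(∅) we have P ∩ Q_f ≠ ∅. -/
/-- `Post*(M) = ⋃_{i ≥ 0} Post^i(M)`. -/
def postStar {σ Q : Type} (A : HedgeAutomaton σ Q) (M : Set (Set Q)) : Set (Set Q) :=
  ⋃ i : ℕ, postIter A i M

/-- `A` is universal: it accepts every tree of `T(Σ)`. -/
def universal {σ Q : Type} (A : HedgeAutomaton σ Q) : Prop :=
  ∀ t : UTree σ, accepted A t

lemma pt_node_eq {σ Q : Type} (A : HedgeAutomaton σ Q) (a : σ) (ts : List (UTree σ)) :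
    Pt A (.node a ts) = postA A a (pih A ts) := by
  ext q
  constructor
  · rintro h
    cases h with
    | @node _ _ _ L qs hr hL hlen hch =>
      refine ⟨L, hr, qs, hL, ?_⟩
      rw [wordsOf, Set.mem_setOf_eq, pih, List.forall₂_map_right_iff,
        List.forall₂_iff_zip]
      refine ⟨hlen, fun {p pt} hm => ?_⟩
      have : (pt, p) ∈ ts.zip qs := by
        rw [← List.zip_swap]; exact List.mem_map.2 ⟨(p, pt), hm, rfl⟩
      exact hch _ this
  · rintro ⟨L, hr, qs, hqsL, hw⟩
    rw [wordsOf, Set.mem_setOf_eq, pih, List.forall₂_map_right_iff,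
      List.forall₂_iff_zip] at hw
    refine HEval.node hr hqsL hw.1 fun p hp => ?_
    have : (p.2, p.1) ∈ qs.zip ts := by
      rw [← List.zip_swap]; exact List.mem_map.2 ⟨p, hp, rfl⟩
    exact hw.2 this

lemma subset_postSet {σ Q : Type} (A : HedgeAutomaton σ Q) (M : Set (Set Q)) :
    M ⊆ postSet A M := Set.subset_union_right

lemma postIter_mono_s3 {σ Q : Type} (A : HedgeAutomaton σ Q) (M : Set (Set Q)) :
    ∀ {i j : ℕ}, i ≤ j → postIter A i M ⊆ postIter A j M := by
  intro i j h
  induction h with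
  | refl => exact subset_rfl
  | step _ ih => exact ih.trans (subset_postSet A _)

lemma pt_mem_postStar {σ Q : Type} (A : HedgeAutomaton σ Q) :
    ∀ t : UTree σ, Pt A t ∈ postStar A (∅ : Set (Set Q))
  | .node a ts => by
    have ih : ∀ t' ∈ ts, Pt A t' ∈ postStar A (∅ : Set (Set Q)) := by
      intro t' ht'
      have := List.sizeOf_lt_of_mem ht'
      exact pt_mem_postStar A t'
    have hN : ∃ N, ∀ t' ∈ ts, Pt A t' ∈ postIter A N (∅ : Set (Set Q)) := by
      clear pt_mem_postStar
      induction ts with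
      | nil => exact ⟨0, by simp⟩
      | cons hd tl ihl =>
        obtain ⟨N, hNl⟩ := ihl (fun t' ht' => ih t' (List.mem_cons_of_mem _ ht'))
        obtain ⟨n, hn⟩ := Set.mem_iUnion.1 (ih hd (List.mem_cons_self))
        refine ⟨max n N, fun t' ht' => ?_⟩
        rcases List.mem_cons.1 ht' with rfl | ht'
        · exact postIter_mono_s3 A _ (le_max_left _ _) hn
        · exact postIter_mono_s3 A _ (le_max_right _ _) (hNl t' ht')
    obtain ⟨N, hN⟩ := hN
    refine Set.mem_iUnion.2 ⟨N + 1, ?_⟩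
    refine Set.mem_union_left _ ⟨a, pih A ts, ?_, pt_node_eq A a ts⟩
    intro x hx
    rcases List.mem_map.1 hx with ⟨t', ht', rfl⟩
    exact hN t' ht'
  decreasing_by simp only [UTree.node.sizeOf_spec]; omega

lemma postStar_eq_pt {σ Q : Type} (A : HedgeAutomaton σ Q) :
    ∀ P ∈ postStar A (∅ : Set (Set Q)), ∃ t : UTree σ, P = Pt A t := by
  intro P hP
  obtain ⟨n, hn⟩ := Set.mem_iUnion.1 hP
  induction n generalizing P with
  | zero => exact absurd hn (Set.notMem_empty _)
  | succ n ihn =>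
    rcases hn with ⟨a, π, hπ, rfl⟩ | hP'
    · have : ∃ h : List (UTree σ), π = pih A h := by
        clear hP
        induction π with
        | nil => exact ⟨[], rfl⟩
        | cons x xs ihx =>
          obtain ⟨h, rfl⟩ := ihx (fun y hy => hπ y (List.mem_cons_of_mem _ hy))
          obtain ⟨t, rfl⟩ := ihn x
            (Set.mem_iUnion.2 ⟨n, hπ x (List.mem_cons_self)⟩)
            (hπ x (List.mem_cons_self))
          exact ⟨t :: h, rfl⟩
      obtain ⟨h, rfl⟩ := this
      exact ⟨.node a h, (pt_node_eq A a h).symm⟩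
    · exact ihn P (Set.mem_iUnion.2 ⟨n, hP'⟩) hP'

/-- Proposition 1: `A` is universal iff every macrostate
`P ∈ Post*(∅)` satisfies `P ∩ Q_f ≠ ∅`. -/
theorem universal_iff_postStar {σ Q : Type} [Fintype σ] [Fintype Q]
    (A : HedgeAutomaton σ Q) (hfin : A.rules.Finite) (hreg : RegularHA A) :
    universal A ↔ ∀ P ∈ postStar A (∅ : Set (Set Q)), P ∩ A.final ≠ ∅ := by
  constructor
  · intro hu P hP
    obtain ⟨t, rfl⟩ := postStar_eq_pt A P hP
    obtain ⟨q, hqf, hq⟩ := hu t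
    exact Set.nonempty_iff_ne_empty.1 ⟨q, hq, hqf⟩
  · intro h t
    have := h (Pt A t) (pt_mem_postStar A t)
    obtain ⟨q, hq, hqf⟩ := Set.nonempty_iff_ne_empty.2 this
    exact ⟨q, hqf, hq⟩
end

section
/- Let A be a hedge automaton and M a set of macrostates. Then Post(M) = {Post_a(r) | a ∈ Σ, r ∈ rel(M)*} ∪ M. -/
/-- A hedge automaton whose horizontal languages are given by NFAs: `step` is the
transition relation of the disjoint union `B` of the fixed NFAs `B_L` (with overall
state set `S`), and each rule `(a, I, F, q)` records the initial states `I = I_L`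
and final states `F = F_L` of the NFA recognizing its horizontal language in `B`. -/
structure HedgeAutNFA (σ Q S : Type) where
  final : Set Q
  step : S → Q → Set S
  rules : Set (σ × Set S × Set S × Q)

/-- Paths in the NFA `B` given by `step`. -/
def nfaPath {Q S : Type} (step : S → Q → Set S) : S → List Q → S → Prop
  | s, [], s' => s = s'
  | s, q :: w, s'' => ∃ s', s' ∈ step s q ∧ nfaPath step s' w s''

/-- The horizontal language recognized between initial states `I` and final states `F`. -/
def nfaLang {Q S : Type} (step : S → Q → Set S) (I F : Set S) : Set (List Q) :=
  {w | ∃ s ∈ I, ∃ s' ∈ F, nfaPath step s w s'}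

/-- `rel(π)`: the pairs `(s, s')` connected in `B` by a path labeled by some word of
`words(π)`. -/
def relw {Q S : Type} (step : S → Q → Set S) (π : List (Set Q)) : Set (S × S) :=
  {p | ∃ w ∈ wordsOf π, nfaPath step p.1 w p.2}

/-- Composition of relations in diagrammatic order. -/
def relComp {S : Type} (r₁ r₂ : Set (S × S)) : Set (S × S) :=
  {p | ∃ s', (p.1, s') ∈ r₁ ∧ (s', p.2) ∈ r₂}

/-- The identity relation on `S`. -/
def relId {S : Type} : Set (S × S) := {p | p.1 = p.2}

/-- `R*`: all compositions `r₁ ∘ ⋯ ∘ rₙ` (`n ≥ 0`) of relations of `R`; contains the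
identity relation (case `n = 0`). -/
def starRel {S : Type} (R : Set (Set (S × S))) : Set (Set (S × S)) :=
  {r | ∃ l : List (Set (S × S)), (∀ x ∈ l, x ∈ R) ∧ r = l.foldr relComp relId}

/-- `Post_a(π)` for a macrostate word `π`. -/
def postAw {σ Q S : Type} (A : HedgeAutNFA σ Q S) (a : σ) (π : List (Set Q)) : Set Q :=
  {q | ∃ I F, (a, I, F, q) ∈ A.rules ∧ (nfaLang A.step I F ∩ wordsOf π).Nonempty}

/-- `Post_a(r)` for a relation `r ⊆ S × S`. -/
def postRel {σ Q S : Type} (A : HedgeAutNFA σ Q S) (a : σ) (r : Set (S × S)) : Set Q :=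
  {q | ∃ I F, (a, I, F, q) ∈ A.rules ∧ ∃ p ∈ r, p.1 ∈ I ∧ p.2 ∈ F}

/-- `Post(M) = {Post_a(π) | a ∈ Σ, π ∈ M*} ∪ M`. -/
def postSetN {σ Q S : Type} (A : HedgeAutNFA σ Q S) (M : Set (Set Q)) : Set (Set Q) :=
  {P | ∃ (a : σ) (π : List (Set Q)), (∀ x ∈ π, x ∈ M) ∧ P = postAw A a π} ∪ M

lemma relw_nil {Q S : Type} (step : S → Q → Set S) : relw step ([] : List (Set Q)) = relId := by
  ext ⟨s, s'⟩
  constructor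
  · rintro ⟨w, hw, hp⟩
    cases hw
    exact hp
  · rintro h
    exact ⟨[], List.Forall₂.nil, h⟩

lemma relw_cons {Q S : Type} (step : S → Q → Set S) (P : Set Q) (π : List (Set Q)) :
    relw step (P :: π) = relComp (relw step [P]) (relw step π) := by
  ext ⟨s, s''⟩
  constructor
  · rintro ⟨w, hw, hp⟩
    cases hw with
    | cons hq hw' =>
      obtain ⟨s', hs', hp'⟩ := hp
      exact ⟨s', ⟨[_], List.Forall₂.cons hq List.Forall₂.nil, s', hs', rfl⟩,
        _, hw', hp'⟩
  · rintro ⟨s', ⟨w₁, hw₁, hp₁⟩, ⟨w₂, hw₂, hp₂⟩⟩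
    cases hw₁ with
    | cons hq hnil =>
      cases hnil
      obtain ⟨t, ht, hteq⟩ := hp₁
      subst hteq
      exact ⟨_ :: w₂, List.Forall₂.cons hq hw₂, t, ht, hp₂⟩

lemma relw_eq_foldr {Q S : Type} (step : S → Q → Set S) (π : List (Set Q)) :
    relw step π = (π.map (fun P => relw step [P])).foldr relComp relId := by
  induction π with
  | nil => simpa using relw_nil step
  | cons P π ih => rw [List.map_cons, List.foldr_cons, relw_cons, ih]

lemma postAw_eq_postRel {σ Q S : Type} (A : HedgeAutNFA σ Q S) (a : σ) (π : List (Set Q)) :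
    postAw A a π = postRel A a (relw A.step π) := by
  ext q
  constructor
  · rintro ⟨I, F, hr, w, ⟨⟨s, hs, s', hs', hp⟩, hw⟩⟩
    exact ⟨I, F, hr, (s, s'), ⟨w, hw, hp⟩, hs, hs'⟩
  · rintro ⟨I, F, hr, ⟨s, s'⟩, ⟨w, hw, hp⟩, hs, hs'⟩
    exact ⟨I, F, hr, w, ⟨s, hs, s', hs', hp⟩, hw⟩

lemma foldr_mem_relw {Q S : Type} (step : S → Q → Set S) (M : Set (Set Q))
    (l : List (Set (S × S))) (hl : ∀ x ∈ l, x ∈ (fun P => relw step [P]) '' M) :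
    ∃ π : List (Set Q), (∀ x ∈ π, x ∈ M) ∧ l.foldr relComp relId = relw step π := by
  induction l with
  | nil => exact ⟨[], by simp, by simp [relw_nil]⟩
  | cons x l ih =>
    obtain ⟨π, hπ, heq⟩ := ih (fun y hy => hl y (List.mem_cons_of_mem _ hy))
    obtain ⟨P, hP, hPx⟩ := hl x List.mem_cons_self
    refine ⟨P :: π, ?_, ?_⟩
    · rintro y hy
      rcases List.mem_cons.mp hy with rfl | hy
      · exact hP
      · exact hπ y hy
    · simp only at hPx
      rw [List.foldr_cons, relw_cons, hPx, heq]

/-- Lemma 5: `Post(M) = {Post_a(r) | a ∈ Σ, r ∈ rel(M)*} ∪ M`. -/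
theorem postSet_eq_via_rel {σ Q S : Type} [Fintype σ] [Fintype Q] [Fintype S]
    (A : HedgeAutNFA σ Q S) (hfin : A.rules.Finite) (M : Set (Set Q)) :
    postSetN A M =
      {P | ∃ (a : σ) (r : Set (S × S)),
          r ∈ starRel ((fun P => relw A.step [P]) '' M) ∧ P = postRel A a r} ∪ M := by
  ext P
  simp only [postSetN, Set.mem_union, Set.mem_setOf_eq]
  apply or_congr_left
  constructor
  · rintro ⟨a, π, hπ, rfl⟩
    refine ⟨a, relw A.step π,
      ⟨π.map (fun P => relw A.step [P]), ?_, relw_eq_foldr A.step π⟩,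
      postAw_eq_postRel A a π⟩
    rintro x hx
    obtain ⟨P', hP', rfl⟩ := List.mem_map.mp hx
    exact ⟨P', hπ P' hP', rfl⟩
  · rintro ⟨a, r, ⟨l, hl, rfl⟩, rfl⟩
    obtain ⟨π, hπ, heq⟩ := foldr_mem_relw A.step M l hl
    exact ⟨a, π, hπ, by rw [heq, postAw_eq_postRel]⟩
end

section
/- Let A be a hedge automaton and M a set of macrostates. For every P ∈ Post*(M) there exists P' ∈ MinPost*(M) such that P' ⊆ P. -/
/-- `⌊S⌋`: the `⊆`-minimal elements of a family of sets. -/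
def mins {α : Type} (S : Set (Set α)) : Set (Set α) :=
  {P ∈ S | ∀ P' ∈ S, P' ⊆ P → P' = P}

/-- `MinPost^i(M)`, with `MinPost^0(M) = ⌊M⌋` and
`MinPost^i(M) = ⌊Post(MinPost^{i-1}(M))⌋`. -/
def minPostIter {σ Q : Type} (A : HedgeAutomaton σ Q) : ℕ → Set (Set Q) → Set (Set Q)
  | 0, M => mins M
  | n + 1, M => mins (postSet A (minPostIter A n M))

/-- `MinPost*(M) = ⋃_{i ≥ 0} MinPost^i(M)`. -/
def minPostStar {σ Q : Type} (A : HedgeAutomaton σ Q) (M : Set (Set Q)) : Set (Set Q) :=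
  ⋃ i : ℕ, minPostIter A i M

lemma exists_min_aux {Q : Type} [Fintype Q] (S : Set (Set Q)) {P : Set Q} (hP : P ∈ S) :
    ∃ P' ∈ mins S, P' ⊆ P := by
  classical
  have hfin : {X ∈ S | X ⊆ P}.Finite := Set.toFinite _
  obtain ⟨X, hX, hmin⟩ :=
    Set.Finite.exists_minimalFor id _ hfin ⟨P, hP, subset_rfl⟩
  refine ⟨X, ⟨hX.1, fun P' hP' hsub => ?_⟩, hX.2⟩
  exact le_antisymm hsub (hmin ⟨hP', hsub.trans hX.2⟩ hsub)

lemma wordsOf_mono_aux {Q : Type} :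
    ∀ {π' π : List (Set Q)}, List.Forall₂ (· ⊆ ·) π' π → wordsOf π' ⊆ wordsOf π := by
  intro π' π h w hw
  simp only [wordsOf, Set.mem_setOf_eq] at hw ⊢
  induction h generalizing w with
  | nil => exact hw
  | cons hx hxs ih =>
    cases hw with
    | cons hw1 hw2 => exact List.Forall₂.cons (hx hw1) (ih hw2)

lemma postA_mono_aux {σ Q : Type} (A : HedgeAutomaton σ Q) (a : σ)
    {π' π : List (Set Q)} (h : List.Forall₂ (· ⊆ ·) π' π) :
    postA A a π' ⊆ postA A a π := by
  rintro q ⟨L, hL, w, hwL, hww⟩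
  exact ⟨L, hL, w, hwL, wordsOf_mono_aux h hww⟩

lemma minPost_step_aux {σ Q : Type} [Fintype σ] [Fintype Q] (A : HedgeAutomaton σ Q)
    (M : Set (Set Q)) {j : ℕ} {P : Set Q} (hP : P ∈ minPostIter A j M) :
    ∃ P' ∈ minPostIter A (j + 1) M, P' ⊆ P :=
  exists_min_aux (postSet A (minPostIter A j M)) (Or.inr hP)

lemma minPost_lift_aux {σ Q : Type} [Fintype σ] [Fintype Q] (A : HedgeAutomaton σ Q)
    (M : Set (Set Q)) {j k : ℕ} (hjk : j ≤ k) {P : Set Q} (hP : P ∈ minPostIter A j M) :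
    ∃ P' ∈ minPostIter A k M, P' ⊆ P := by
  induction k with
  | zero => exact ⟨P, by simpa [Nat.le_zero.mp hjk] using hP, subset_rfl⟩
  | succ n ih =>
    rcases Nat.lt_or_ge j (n + 1) with h | h
    · obtain ⟨P', hP', hsub⟩ := ih (Nat.lt_succ_iff.mp h)
      obtain ⟨P'', hP'', hsub'⟩ := minPost_step_aux A M hP'
      exact ⟨P'', hP'', hsub'.trans hsub⟩
    · have : j = n + 1 := le_antisymm hjk h
      exact ⟨P, by simpa [this] using hP, subset_rfl⟩

lemma list_lift_aux {σ Q : Type} [Fintype σ] [Fintype Q] (A : HedgeAutomaton σ Q)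
    (M : Set (Set Q)) {k m : ℕ} (hkm : k ≤ m) :
    ∀ (π : List (Set Q)), (∀ y ∈ π, y ∈ minPostIter A k M) →
      ∃ π', (∀ y ∈ π', y ∈ minPostIter A m M) ∧ List.Forall₂ (· ⊆ ·) π' π := by
  intro π
  induction π with
  | nil => exact fun _ => ⟨[], by simp, List.Forall₂.nil⟩
  | cons x xs ih =>
    intro h
    obtain ⟨x', hx', hsub⟩ := minPost_lift_aux A M hkm (h x (by simp))
    obtain ⟨π', hπ', hf⟩ := ih (fun y hy => h y (by simp [hy]))
    refine ⟨x' :: π', ?_, List.Forall₂.cons hsub hf⟩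
    intro y hy
    rcases List.mem_cons.mp hy with rfl | hy
    exacts [hx', hπ' y hy]

lemma forall2_sub_trans {Q : Type} :
    ∀ {a b c : List (Set Q)}, List.Forall₂ (· ⊆ ·) a b → List.Forall₂ (· ⊆ ·) b c →
      List.Forall₂ (· ⊆ ·) a c := by
  intro a b c h1 h2
  induction h2 generalizing a with
  | nil => exact h1
  | cons hx hxs ih =>
    cases h1 with
    | cons h1a h1b => exact List.Forall₂.cons (h1a.trans hx) (ih h1b)

lemma exists_pi_aux {σ Q : Type} [Fintype σ] [Fintype Q] (A : HedgeAutomaton σ Q)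
    (M : Set (Set Q)) :
    ∀ (π : List (Set Q)),
      (∀ x ∈ π, ∃ j, ∃ x' ∈ minPostIter A j M, x' ⊆ x) →
      ∃ k π', (∀ y ∈ π', y ∈ minPostIter A k M) ∧ List.Forall₂ (· ⊆ ·) π' π := by
  intro π
  induction π with
  | nil => exact fun _ => ⟨0, [], by simp, List.Forall₂.nil⟩
  | cons x xs ih =>
    intro h
    obtain ⟨j, x', hx', hsub⟩ := h x (by simp)
    obtain ⟨k, π', hπ', hf⟩ := ih (fun y hy => h y (by simp [hy]))
    obtain ⟨x'', hx'', hsub2⟩ := minPost_lift_aux A M (le_max_left j k) hx'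
    obtain ⟨π'', hπ'', hf2⟩ := list_lift_aux A M (le_max_right j k) π' hπ'
    refine ⟨max j k, x'' :: π'', ?_, List.Forall₂.cons (hsub2.trans hsub)
      (forall2_sub_trans hf2 hf)⟩
    intro y hy
    rcases List.mem_cons.mp hy with rfl | hy
    exacts [hx'', hπ'' y hy]

lemma main_iter_aux {σ Q : Type} [Fintype σ] [Fintype Q]
    (A : HedgeAutomaton σ Q) (M : Set (Set Q)) :
    ∀ i, ∀ P ∈ postIter A i M, ∃ P' ∈ minPostStar A M, P' ⊆ P := by
  intro i
  induction i with
  | zero =>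
    intro P hP
    obtain ⟨P', hP', hsub⟩ := exists_min_aux M hP
    exact ⟨P', Set.mem_iUnion.mpr ⟨0, hP'⟩, hsub⟩
  | succ n ih =>
    intro P hP
    rcases hP with hP | hP
    · obtain ⟨a, π, hπ, rfl⟩ := hP
      have hmem : ∀ x ∈ π, ∃ j, ∃ x' ∈ minPostIter A j M, x' ⊆ x := by
        intro x hx
        obtain ⟨x', hx', hsub⟩ := ih x (hπ x hx)
        obtain ⟨j, hj⟩ := Set.mem_iUnion.mp hx'
        exact ⟨j, x', hj, hsub⟩
      obtain ⟨k, π', hπ', hf⟩ := exists_pi_aux A M π hmem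
      have hpost : postA A a π' ∈ postSet A (minPostIter A k M) :=
        Or.inl ⟨a, π', hπ', rfl⟩
      obtain ⟨P'', hP'', hsub⟩ := exists_min_aux _ hpost
      exact ⟨P'', Set.mem_iUnion.mpr ⟨k + 1, hP''⟩,
        hsub.trans (postA_mono_aux A a hf)⟩
    · exact ih P hP

/-- Lemma 6: every `P ∈ Post*(M)` contains some
`P' ∈ MinPost*(M)`. -/
theorem postStar_minPostStar {σ Q : Type} [Fintype σ] [Fintype Q]
    (A : HedgeAutomaton σ Q) (hfin : A.rules.Finite) (hreg : RegularHA A)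
    (M : Set (Set Q)) :
    ∀ P ∈ postStar A M, ∃ P' ∈ minPostStar A M, P' ⊆ P := by
  intro P hP
  obtain ⟨i, hP⟩ := Set.mem_iUnion.mp hP
  exact main_iter_aux A M i P hP
end

section
/- Let A = (Q, Σ, Q_f, Δ) be a hedge automaton and a ∈ Σ. Then A is a-universal if and only if X_a = ∅. Moreover, if X_a is nonempty then for every π ∈ X_a, choosing a hedge h ∈ H(Σ) with π = π_h, the word a[h]ā is the linearization of a tree over Σ that is not accepted by A. -/
/-- `A` is `u`-universal: every tree whose linearization starts with `u` is accepted. -/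
def uUniversal {σ Q : Type} (A : HedgeAutomaton σ Q) (u : List (σ ⊕ σ)) : Prop :=
  ∀ t : UTree σ, u <+: t.lin → accepted A t

/-- `E* = {π_h | h ∈ H(Σ)}`. -/
def Estar {σ Q : Type} (A : HedgeAutomaton σ Q) : Set (List (Set Q)) :=
  Set.range (pih A)

/-- `X_a = {π ∈ E* | Post_a(π) ∩ Q_f = ∅}`. -/
def Xa {σ Q : Type} (A : HedgeAutomaton σ Q) (a : σ) : Set (List (Set Q)) :=
  {π ∈ Estar A | postA A a π ∩ A.final = ∅}

lemma lin_node {σ : Type} (a : σ) (ts : List (UTree σ)) :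
    (UTree.node a ts).lin = Sum.inl a :: (linH ts ++ [Sum.inr a]) := by
  rw [UTree.lin, linH]
  congr 2
  rw [List.map_congr_left (fun x _ => rfl : ∀ x ∈ ts.attach, UTree.lin x.1 = UTree.lin x.1)]
  simp

lemma heval_node_iff {σ Q : Type} (A : HedgeAutomaton σ Q) (a : σ) (ts : List (UTree σ))
    (q : Q) : HEval A (UTree.node a ts) q ↔ q ∈ postA A a (pih A ts) := by
  constructor
  · rintro ⟨hr, hL, hlen, hall⟩
    refine ⟨_, hr, ?_⟩
    rename_i L qs
    refine ⟨qs, hL, ?_⟩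
    unfold wordsOf pih
    rw [Set.mem_setOf_eq, List.forall₂_map_right_iff, List.forall₂_iff_zip]
    refine ⟨hlen, fun {p t} hpt => ?_⟩
    have h2 : (t, p) ∈ (qs.zip ts).map Prod.swap := List.mem_map.2 ⟨(p, t), hpt, rfl⟩
    rw [List.zip_swap] at h2
    exact hall _ h2
  · rintro ⟨L, hr, qs, hL, hw⟩
    have hw' : List.Forall₂ (fun p t => HEval A t p) qs ts := by
      have := hw
      unfold wordsOf pih at this
      rw [Set.mem_setOf_eq, List.forall₂_map_right_iff] at this
      exact this
    rw [List.forall₂_iff_zip] at hw'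
    refine HEval.node hr hL hw'.1 (fun p hp => ?_)
    have : (p.2, p.1) ∈ (ts.zip qs).map Prod.swap := List.mem_map.2 ⟨p, hp, rfl⟩
    rw [List.zip_swap] at this
    exact hw'.2 this

lemma accepted_node_iff {σ Q : Type} (A : HedgeAutomaton σ Q) (a : σ) (ts : List (UTree σ)) :
    accepted A (UTree.node a ts) ↔ (postA A a (pih A ts) ∩ A.final).Nonempty := by
  constructor
  · rintro ⟨q, hq, hv⟩
    exact ⟨q, (heval_node_iff A a ts q).1 hv, hq⟩
  · rintro ⟨q, h1, h2⟩
    exact ⟨q, h2, (heval_node_iff A a ts q).2 h1⟩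

/-- Proposition 3: `A` is `a`-universal iff `X_a = ∅`; moreover for
every `π ∈ X_a` and every hedge `h` with `π = π_h`, the word `a[h]ā` is the
linearization of a tree not accepted by `A`. -/
theorem a_universal_iff_Xa {σ Q : Type} [Fintype σ] [Fintype Q]
    (A : HedgeAutomaton σ Q) (hfin : A.rules.Finite) (hreg : RegularHA A) (a : σ) :
    (uUniversal A [Sum.inl a] ↔ Xa A a = ∅) ∧
    (∀ π ∈ Xa A a, ∀ h : List (UTree σ), π = pih A h →
      ∃ t : UTree σ, t.lin = Sum.inl a :: (linH h ++ [Sum.inr a]) ∧ ¬ accepted A t) := by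
  constructor
  · constructor
    · intro hu
      ext π
      simp only [Set.mem_empty_iff_false, iff_false]
      rintro ⟨⟨h, rfl⟩, hpost⟩
      have hac := hu (UTree.node a h) (by rw [lin_node]; exact ⟨_, rfl⟩)
      rw [accepted_node_iff] at hac
      exact (Set.not_nonempty_iff_eq_empty.2 hpost) hac
    · intro hX t hpre
      obtain ⟨b, ts⟩ := t
      rw [lin_node] at hpre
      obtain ⟨v, hv⟩ := hpre
      have hb : a = b := by
        have hv' : Sum.inl a :: v = Sum.inl b :: (linH ts ++ [Sum.inr b]) := hv
        exact Sum.inl.inj (List.head_eq_of_cons_eq hv')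
      subst hb
      rw [accepted_node_iff]
      by_contra hne
      have : pih A ts ∈ Xa A a := ⟨⟨ts, rfl⟩, Set.not_nonempty_iff_eq_empty.1 hne⟩
      rw [hX] at this
      exact this
  · rintro π hπ h rfl
    refine ⟨UTree.node a h, lin_node a h, ?_⟩
    rw [accepted_node_iff]
    exact Set.not_nonempty_iff_eq_empty.2 hπ.2
end

section
/- Let A = (Q, Σ, Q_f, Δ) be a hedge automaton and let wa be a nonempty proper prefix of the linearization of some tree, with a ∈ Σ. Then Y_wa is ⊆-downward closed within rel(E*): for all r ∈ Y_wa and r' ∈ rel(E*) with r' ⊆ r, we have r' ∈ Y_wa. -/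
/-- `HEvalN A t q` holds iff some run of `A` on `t` labels the root of `t` by `q`
(the horizontal language of a rule `(a, I, F, q)` is `nfaLang A.step I F`). -/
inductive HEvalN {σ Q S : Type} (A : HedgeAutNFA σ Q S) : UTree σ → Q → Prop
  | node {a : σ} {ts : List (UTree σ)} {q : Q} {I F : Set S} {qs : List Q} :
      (a, I, F, q) ∈ A.rules → qs ∈ nfaLang A.step I F → qs.length = ts.length →
      (∀ p ∈ ts.zip qs, HEvalN A p.1 p.2) → HEvalN A (UTree.node a ts) q

/-- The macrostate `P_t = {q | t →A q}` of a tree `t`. -/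
def PtN {σ Q S : Type} (A : HedgeAutNFA σ Q S) (t : UTree σ) : Set Q := {q | HEvalN A t q}

/-- The macrostate word `π_h = P_{t₁}⋯P_{tₙ}` of a hedge `h = t₁⋯tₙ`. -/
def pihN {σ Q S : Type} (A : HedgeAutNFA σ Q S) (h : List (UTree σ)) : List (Set Q) :=
  h.map (PtN A)

/-- `rel(E*) = {rel(π_h) | h ∈ H(Σ)}`. -/
def relEstar {σ Q S : Type} (A : HedgeAutNFA σ Q S) : Set (Set (S × S)) :=
  relw A.step '' Set.range (pihN A)

/-- `Pref(Y) = {r ∈ rel(E*) | ∃ r' ∈ rel(E*) : r ∘ r' ∈ Y}`. -/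
def PrefY {σ Q S : Type} (A : HedgeAutNFA σ Q S) (Y : Set (Set (S × S))) :
    Set (Set (S × S)) :=
  {r ∈ relEstar A | ∃ r' ∈ relEstar A, relComp r r' ∈ Y}

/-- `YRel A w a Y` holds iff `Y = Y_{wa}`:
`Y_a = {r ∈ rel(E*) | Post_a(r) ∩ Q_f = ∅}` and, for `w = w'a'[h']`,
`Y_{wa} = {r ∈ rel(E*) | rel(π_{h'}) ∘ rel(Post_a(r)) ∈ Pref(Y_{w'a'})}`. -/
inductive YRel {σ Q S : Type} (A : HedgeAutNFA σ Q S) :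
    List (σ ⊕ σ) → σ → Set (Set (S × S)) → Prop
  | base (a : σ) : YRel A [] a {r ∈ relEstar A | postRel A a r ∩ A.final = ∅}
  | step {w' : List (σ ⊕ σ)} {a' : σ} {Y' : Set (Set (S × S))}
      (a : σ) (h' : List (UTree σ)) :
      YRel A w' a' Y' →
      YRel A (w' ++ Sum.inl a' :: linH h') a
        {r ∈ relEstar A |
          relComp (relw A.step (pihN A h')) (relw A.step [postRel A a r]) ∈ PrefY A Y'}


lemma nfaPath_append {Q S : Type} (step : S → Q → Set S) (w₁ w₂ : List Q) (s s'' : S) :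
    nfaPath step s (w₁ ++ w₂) s'' ↔ ∃ s', nfaPath step s w₁ s' ∧ nfaPath step s' w₂ s'' := by
  induction w₁ generalizing s with
  | nil => simp [nfaPath]
  | cons q w₁ ih =>
    constructor
    · rintro ⟨s1, hs1, hp⟩
      rcases (ih s1).mp hp with ⟨s', h1, h2⟩
      exact ⟨s', ⟨s1, hs1, h1⟩, h2⟩
    · rintro ⟨s', ⟨s1, hs1, h1⟩, h2⟩
      exact ⟨s1, hs1, (ih s1).mpr ⟨s', h1, h2⟩⟩

lemma relw_append {Q S : Type} (step : S → Q → Set S) (π₁ π₂ : List (Set Q)) :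
    relw step (π₁ ++ π₂) = relComp (relw step π₁) (relw step π₂) := by
  ext ⟨s, s''⟩
  constructor
  · rintro ⟨w, hw, hp⟩
    have h₁ := List.forall₂_take_append w π₁ π₂ hw
    have h₂ := List.forall₂_drop_append w π₁ π₂ hw
    have hsplit : w = w.take π₁.length ++ w.drop π₁.length := (List.take_append_drop _ _).symm
    rw [hsplit] at hp
    rcases (nfaPath_append step _ _ s s'').mp hp with ⟨s', hp₁, hp₂⟩
    exact ⟨s', ⟨_, h₁, hp₁⟩, ⟨_, h₂, hp₂⟩⟩
  · rintro ⟨s', ⟨w₁, h₁, hp₁⟩, ⟨w₂, h₂, hp₂⟩⟩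
    exact ⟨w₁ ++ w₂, List.rel_append h₁ h₂,
      (nfaPath_append step w₁ w₂ s s'').mpr ⟨s', hp₁, hp₂⟩⟩

lemma pihN_append {σ Q S : Type} (A : HedgeAutNFA σ Q S) (h₁ h₂ : List (UTree σ)) :
    pihN A (h₁ ++ h₂) = pihN A h₁ ++ pihN A h₂ := List.map_append

lemma relComp_mem_relEstar {σ Q S : Type} (A : HedgeAutNFA σ Q S) {r₁ r₂ : Set (S × S)}
    (h₁ : r₁ ∈ relEstar A) (h₂ : r₂ ∈ relEstar A) : relComp r₁ r₂ ∈ relEstar A := by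
  rcases h₁ with ⟨π₁, ⟨g₁, rfl⟩, rfl⟩
  rcases h₂ with ⟨π₂, ⟨g₂, rfl⟩, rfl⟩
  exact ⟨pihN A (g₁ ++ g₂), ⟨g₁ ++ g₂, rfl⟩,
    by rw [pihN_append, relw_append]⟩

lemma postRel_mono {σ Q S : Type} (A : HedgeAutNFA σ Q S) (a : σ) {r r' : Set (S × S)}
    (h : r' ⊆ r) : postRel A a r' ⊆ postRel A a r := by
  rintro q ⟨I, F, hrule, p, hp, hI, hF⟩
  exact ⟨I, F, hrule, p, h hp, hI, hF⟩

lemma relw_single_mono {Q S : Type} (step : S → Q → Set S) {P P' : Set Q}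
    (h : P' ⊆ P) : relw step [P'] ⊆ relw step [P] := by
  rintro p ⟨w, hw, hp⟩
  refine ⟨w, ?_, hp⟩
  cases hw with
  | cons hq hnil => exact List.Forall₂.cons (h hq) hnil

lemma relComp_mono_right {S : Type} (r : Set (S × S)) {r₁ r₂ : Set (S × S)}
    (h : r₁ ⊆ r₂) : relComp r r₁ ⊆ relComp r r₂ := by
  rintro p ⟨s', h1, h2⟩
  exact ⟨s', h1, h h2⟩

lemma relComp_mono_left {S : Type} (r : Set (S × S)) {r₁ r₂ : Set (S × S)}
    (h : r₁ ⊆ r₂) : relComp r₁ r ⊆ relComp r₂ r := by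
  rintro p ⟨s', h1, h2⟩
  exact ⟨s', h h1, h2⟩

lemma postRel_relw_pihN {σ Q S : Type} (A : HedgeAutNFA σ Q S) (a : σ) (h : List (UTree σ)) :
    postRel A a (relw A.step (pihN A h)) = PtN A (UTree.node a h) := by
  ext q
  constructor
  · rintro ⟨I, F, hrule, ⟨s, s'⟩, ⟨qs, hqs, hpath⟩, hI, hF⟩
    have hf : List.Forall₂ (fun q t => HEvalN A t q) qs h :=
      List.forall₂_map_right_iff.mp hqs
    refine HEvalN.node hrule ⟨s, hI, s', hF, hpath⟩ hf.length_eq ?_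
    intro p hp
    have hflip : List.Forall₂ (fun t q => HEvalN A t q) h qs := hf.flip
    have := (List.forall₂_iff_zip.mp hflip).2 hp
    exact this
  · rintro ⟨hrule, hlang, hlen, hall⟩
    rename_i I F qs
    rcases hlang with ⟨s, hI, s', hF, hpath⟩
    refine ⟨I, F, hrule, ⟨s, s'⟩, ⟨qs, ?_, hpath⟩, hI, hF⟩
    refine List.forall₂_map_right_iff.mpr ?_
    have hflip : List.Forall₂ (fun t q => HEvalN A t q) h qs :=
      List.forall₂_iff_zip.mpr ⟨hlen.symm, fun hp => hall _ hp⟩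
    exact hflip.flip

lemma postRel_relEstar_mem {σ Q S : Type} (A : HedgeAutNFA σ Q S) (a : σ)
    {r : Set (S × S)} (hr : r ∈ relEstar A) :
    relw A.step [postRel A a r] ∈ relEstar A := by
  rcases hr with ⟨π, ⟨g, rfl⟩, rfl⟩
  refine ⟨pihN A [UTree.node a g], ⟨[UTree.node a g], rfl⟩, ?_⟩
  rw [show pihN A [UTree.node a g] = [PtN A (UTree.node a g)] from rfl, ← postRel_relw_pihN]

/-- Lemma 8: for `wa` a nonempty proper prefix of some
linearization, `Y_{wa}` is `⊆`-downward closed within `rel(E*)`. -/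
theorem Ywa_downward_closed {σ Q S : Type} [Fintype σ] [Fintype Q] [Fintype S]
    (A : HedgeAutNFA σ Q S) (hfin : A.rules.Finite)
    (w : List (σ ⊕ σ)) (a : σ) (Y : Set (Set (S × S)))
    (hY : YRel A w a Y)
    (hpre : ProperPrefix (w ++ [Sum.inl a])) :
    ∀ r ∈ Y, ∀ r' ∈ relEstar A, r' ⊆ r → r' ∈ Y := by
  clear hpre
  induction hY with
  | base a =>
    rintro r ⟨hrE, hre⟩ r' hr'E hsub
    refine ⟨hr'E, Set.eq_empty_of_subset_empty ?_⟩
    rw [← hre]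
    exact Set.inter_subset_inter_left _ (postRel_mono A a hsub)
  | step a h' hY' ih =>
    rename_i w' a' Y'
    rintro r ⟨hrE, hcE, r'', hr''E, hY''⟩ r' hr'E hsub
    have hpost : relw A.step [postRel A a r'] ∈ relEstar A := postRel_relEstar_mem A a hr'E
    have hπ : relw A.step (pihN A h') ∈ relEstar A := ⟨pihN A h', ⟨h', rfl⟩, rfl⟩
    have hc'E : relComp (relw A.step (pihN A h')) (relw A.step [postRel A a r']) ∈ relEstar A :=
      relComp_mem_relEstar A hπ hpost
    refine ⟨hr'E, hc'E, r'', hr''E, ?_⟩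
    have hsub2 : relComp (relComp (relw A.step (pihN A h')) (relw A.step [postRel A a r'])) r''
        ⊆ relComp (relComp (relw A.step (pihN A h')) (relw A.step [postRel A a r])) r'' :=
      relComp_mono_left _ (relComp_mono_right _
        (relw_single_mono A.step (postRel_mono A a hsub)))
    exact ih _ hY'' _ (relComp_mem_relEstar A hc'E hr''E) hsub2
end

section
/- Let A be a VPA over Σ, u a nonempty proper prefix of the linearization of some tree, and h a hedge over Σ. Then Safe(u[h]) = Safe(u) and LSafe(u[h]) = LSafe(u). -/
/-- A visibly pushdown automaton over `σ` (calls `Sum.inl a`, returns `Sum.inr a`):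
states `Q`, stack alphabet `Γ`, initial and final states, push rules
`q –a:γ→ q'` (for `a ∈ Σ`) and pop rules `q –ā:γ→ q'` (for `ā ∈ Σ̄`). -/
structure VPA (σ Q Γ : Type) where
  init : Set Q
  final : Set Q
  push : Q → σ → Γ → Q → Prop
  pop : Q → σ → Γ → Q → Prop

namespace VPA

/-- One step between configurations (a configuration is a pair `(q, σ) ∈ Q × Γ*`). -/
def Step {σ Q Γ : Type} (A : VPA σ Q Γ) :
    (Q × List Γ) → (σ ⊕ σ) → (Q × List Γ) → Prop
  | c, Sum.inl a, c' => ∃ γ, A.push c.1 a γ c'.1 ∧ c'.2 = γ :: c.2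
  | c, Sum.inr a, c' => ∃ γ, A.pop c.1 a γ c'.1 ∧ c.2 = γ :: c'.2

/-- Extension of `Step` to words over `σ ⊕ σ`. -/
def Steps {σ Q Γ : Type} (A : VPA σ Q Γ) :
    (Q × List Γ) → List (σ ⊕ σ) → (Q × List Γ) → Prop
  | c, [], c' => c = c'
  | c, x :: w, c'' => ∃ c', A.Step c x c' ∧ A.Steps c' w c''

/-- A word is accepted if it leads from some initial configuration `(q_i, ε)` to
some final configuration `(q_f, ε)`. -/
def AcceptsWord {σ Q Γ : Type} (A : VPA σ Q Γ) (w : List (σ ⊕ σ)) : Prop :=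
  ∃ qi ∈ A.init, ∃ qf ∈ A.final, A.Steps (qi, []) w (qf, [])

/-- A tree is accepted if its linearization is. -/
def AcceptsTree {σ Q Γ : Type} (A : VPA σ Q Γ) (t : UTree σ) : Prop :=
  A.AcceptsWord t.lin

end VPA

/-- `Safe A u`: the sets of configurations that are safe for `u`. -/
def Safe {σ Q Γ : Type} (A : VPA σ Q Γ) (u : List (σ ⊕ σ)) :
    Set (Set (Q × List Γ)) :=
  {C | ∀ v : List (σ ⊕ σ), (∃ t : UTree σ, u ++ v = t.lin) →
        ∃ c ∈ C, ∃ p ∈ A.final, A.Steps c v (p, [])}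

/-- `LSafe A u`: the sets of configurations that are leaf-safe for `u`
(only continuations starting with a closing tag are considered). -/
def LSafe {σ Q Γ : Type} (A : VPA σ Q Γ) (u : List (σ ⊕ σ)) :
    Set (Set (Q × List Γ)) :=
  {C | ∀ (b : σ) (v' : List (σ ⊕ σ)), (∃ t : UTree σ, u ++ (Sum.inr b :: v') = t.lin) →
        ∃ c ∈ C, ∃ p ∈ A.final, A.Steps c (Sum.inr b :: v') (p, [])}

/-- `A` is `u`-universal: every tree whose linearization starts with `u` is accepted. -/
def uUniversalV {σ Q Γ : Type} (A : VPA σ Q Γ) (u : List (σ ⊕ σ)) : Prop :=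
  ∀ t : UTree σ, u <+: t.lin → A.AcceptsTree t

namespace Aux
variable {σ : Type}

lemma lin_node (a : σ) (ts : List (UTree σ)) :
    (UTree.node a ts).lin = Sum.inl a :: (linH ts ++ [Sum.inr a]) := by
  rw [UTree.lin, linH, List.attach_map_val]

lemma linH_append (h₁ h₂ : List (UTree σ)) : linH (h₁ ++ h₂) = linH h₁ ++ linH h₂ := by
  simp [linH]

lemma linH_cons (t : UTree σ) (h : List (UTree σ)) : linH (t :: h) = t.lin ++ linH h := by
  simp [linH]

lemma linH_nil : linH ([] : List (UTree σ)) = [] := rfl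

def ClosesH : List σ → List (σ ⊕ σ) → Prop
  | [], v => ∃ h : List (UTree σ), v = linH h
  | b :: s, v => ∃ (h : List (UTree σ)) (v' : List (σ ⊕ σ)),
      v = linH h ++ Sum.inr b :: v' ∧ ClosesH s v'

def TCloses : List σ → List (σ ⊕ σ) → Prop
  | [], v => v = []
  | b :: s, v => ∃ (h : List (UTree σ)) (v' : List (σ ⊕ σ)),
      v = linH h ++ Sum.inr b :: v' ∧ TCloses s v'

inductive PendH : List (σ ⊕ σ) → List σ → Prop
  | base (h : List (UTree σ)) : PendH (linH h) []
  | push (u : List (σ ⊕ σ)) (s : List σ) (b : σ) (h : List (UTree σ)) :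
      PendH u s → PendH (u ++ Sum.inl b :: linH h) (b :: s)

def TPend (u : List (σ ⊕ σ)) (s : List σ) : Prop :=
  ∃ (a : σ) (u₁ : List (σ ⊕ σ)) (s₁ : List σ),
    u = Sum.inl a :: u₁ ∧ s = s₁ ++ [a] ∧ PendH u₁ s₁

lemma PendH_absorb {u : List (σ ⊕ σ)} {s : List σ} (hp : PendH u s) (h : List (UTree σ)) :
    PendH (u ++ linH h) s := by
  cases hp with
  | base h₀ => rw [← linH_append]; exact PendH.base _
  | push u₀ s₀ b h₀ hp₀ =>
      have := PendH.push u₀ s₀ b (h₀ ++ h) hp₀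
      simpa [linH_append] using this

lemma PendH_prepend {u : List (σ ⊕ σ)} {s : List σ} (hp : PendH u s)
    (h : List (UTree σ)) (a : σ) :
    PendH (linH h ++ Sum.inl a :: u) (s ++ [a]) := by
  induction hp with
  | base h₁ => exact PendH.push (linH h) [] a h₁ (PendH.base h)
  | push u₀ s₀ b h₁ hp₀ ih =>
      have := PendH.push _ (s₀ ++ [a]) b h₁ ih
      simpa using this

lemma PendH_prepend_hedge {u : List (σ ⊕ σ)} {s : List σ} (hp : PendH u s)
    (h : List (UTree σ)) : PendH (linH h ++ u) s := by
  induction hp with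
  | base h₁ => rw [← linH_append]; exact PendH.base _
  | push u₀ s₀ b h₁ hp₀ ih =>
      have := PendH.push _ s₀ b h₁ ih
      simpa using this

lemma ClosesH_prepend {s : List σ} {v : List (σ ⊕ σ)} (hc : ClosesH s v)
    (h : List (UTree σ)) : ClosesH s (linH h ++ v) := by
  cases s with
  | nil => obtain ⟨h₁, rfl⟩ := hc; exact ⟨h ++ h₁, (linH_append _ _).symm⟩
  | cons b s =>
      obtain ⟨h₁, v', rfl, hc'⟩ := hc
      exact ⟨h ++ h₁, v', by simp [linH_append], hc'⟩

lemma ClosesH_snoc {s : List σ} {w : List (σ ⊕ σ)} (hc : ClosesH s w)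
    (a : σ) (h' : List (UTree σ)) :
    ClosesH (s ++ [a]) (w ++ Sum.inr a :: linH h') := by
  induction s generalizing w with
  | nil => obtain ⟨h₀, rfl⟩ := hc; exact ⟨h₀, linH h', by simp, ⟨h', rfl⟩⟩
  | cons b s ih =>
      obtain ⟨h₀, v', rfl, hc'⟩ := hc
      exact ⟨h₀, v' ++ Sum.inr a :: linH h', by simp, ih hc'⟩

lemma TCloses_of_ClosesH {s : List σ} {w : List (σ ⊕ σ)} (hc : ClosesH s w) (a : σ) :
    TCloses (s ++ [a]) (w ++ [Sum.inr a]) := by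
  induction s generalizing w with
  | nil => obtain ⟨h₀, rfl⟩ := hc; exact ⟨h₀, [], by simp, rfl⟩
  | cons b s ih =>
      obtain ⟨h₀, v', rfl, hc'⟩ := hc
      exact ⟨h₀, v' ++ [Sum.inr a], by simp, ih hc'⟩

lemma TCloses_destruct {s : List σ} {a : σ} {v : List (σ ⊕ σ)}
    (hc : TCloses (s ++ [a]) v) :
    ∃ w, v = w ++ [Sum.inr a] ∧ ClosesH s w := by
  induction s generalizing v with
  | nil =>
      obtain ⟨h₀, v', rfl, hv'⟩ := hc
      rcases (show v' = [] from hv') with rfl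
      exact ⟨linH h₀, by simp, ⟨h₀, rfl⟩⟩
  | cons b s ih =>
      obtain ⟨h₀, v', rfl, hc'⟩ := hc
      obtain ⟨w, rfl, hw⟩ := ih hc'
      exact ⟨linH h₀ ++ Sum.inr b :: w, by simp, ⟨h₀, w, rfl, hw⟩⟩

lemma HSound {u : List (σ ⊕ σ)} {s : List σ} (hp : PendH u s) :
    ∀ v, ClosesH s v → ∃ h : List (UTree σ), u ++ v = linH h := by
  induction hp with
  | base h₀ =>
      intro v hv; obtain ⟨h₁, rfl⟩ := hv
      exact ⟨h₀ ++ h₁, (linH_append _ _).symm⟩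
  | push u₀ s₀ b h₀ hp₀ ih =>
      intro v hv
      obtain ⟨h₁, v', rfl, hc'⟩ := hv
      obtain ⟨hh, hhh⟩ := ih (linH [UTree.node b (h₀ ++ h₁)] ++ v') (ClosesH_prepend hc' _)
      refine ⟨hh, ?_⟩
      rw [← hhh]
      simp [linH_cons, linH_append, lin_node, linH_nil]

lemma HC : ∀ (n : ℕ) (ts : List (UTree σ)), sizeOf ts ≤ n → ∀ u v, u ++ v = linH ts →
    ∃ s, PendH u s ∧ ClosesH s v := by
  intro n
  induction n using Nat.strong_induction_on with
  | _ n ih =>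
    intro ts hts u v huv
    match ts with
    | [] =>
        rw [linH_nil] at huv
        obtain ⟨rfl, rfl⟩ := List.append_eq_nil_iff.mp huv
        exact ⟨[], by simpa [linH_nil] using PendH.base ([] : List (UTree σ)),
          ⟨[], linH_nil.symm⟩⟩
    | (UTree.node a ch) :: ts' =>
        rw [linH_cons, lin_node] at huv
        match u with
        | [] => exact ⟨[], by simpa [linH_nil] using PendH.base ([] : List (UTree σ)),
            ⟨UTree.node a ch :: ts', by simpa [linH_cons, lin_node] using huv⟩⟩
        | x :: u₁ =>
            simp only [List.cons_append, List.cons.injEq] at huv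
            obtain ⟨rfl, huv⟩ := huv
            have huv' : u₁ ++ v = linH ch ++ (Sum.inr a :: linH ts') := by
              rw [huv]; simp
            rcases List.append_eq_append_iff.mp huv' with ⟨w, hch, hv⟩ | ⟨w, hu₁, hw⟩
            · have h1 : sizeOf ch < n := by
                have := hts
                simp only [List.cons.sizeOf_spec, UTree.node.sizeOf_spec] at this
                omega
              obtain ⟨s', hp, hc⟩ := ih (sizeOf ch) h1 ch le_rfl u₁ w hch.symm
              refine ⟨s' ++ [a], ?_, ?_⟩
              · simpa [linH_nil] using PendH_prepend hp [] a
              · rw [hv]; exact ClosesH_snoc hc a ts'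
            · match w with
              | [] =>
                  rw [List.nil_append] at hw
                  subst hu₁
                  refine ⟨[a], by simpa [linH_nil] using PendH_prepend (PendH.base ch) [] a,
                    ⟨[], linH ts', by simp [linH_nil, ← hw], ⟨ts', rfl⟩⟩⟩
              | y :: w₁ =>
                  simp only [List.cons_append, List.cons.injEq] at hw
                  obtain ⟨rfl, hw⟩ := hw
                  have h2 : sizeOf ts' < n := by
                    have := hts
                    simp only [List.cons.sizeOf_spec, UTree.node.sizeOf_spec] at this
                    omega
                  obtain ⟨s', hp, hc⟩ := ih (sizeOf ts') h2 ts' le_rfl w₁ v hw.symm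
                  refine ⟨s', ?_, hc⟩
                  have := PendH_prepend_hedge hp [UTree.node a ch]
                  simpa [linH_cons, linH_nil, lin_node, hu₁] using this

lemma TComplete {t : UTree σ} {u v : List (σ ⊕ σ)} (huv : u ++ v = t.lin)
    (hu : u ≠ []) (hv : v ≠ []) : ∃ s, TPend u s ∧ TCloses s v := by
  obtain ⟨a, ch⟩ := t
  rw [lin_node] at huv
  match u with
  | [] => exact absurd rfl hu
  | x :: u₁ =>
      simp only [List.cons_append, List.cons.injEq] at huv
      obtain ⟨rfl, huv⟩ := huv
      rcases List.append_eq_append_iff.mp huv with ⟨w, hch, hw⟩ | ⟨w, hu₁, hw⟩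
      · obtain ⟨s', hp, hc⟩ := HC (sizeOf ch) ch le_rfl u₁ w hch.symm
        exact ⟨s' ++ [a], ⟨a, u₁, s', rfl, rfl, hp⟩, hw ▸ TCloses_of_ClosesH hc a⟩
      · match w with
        | [] =>
            rw [List.nil_append] at hw
            rw [List.append_nil] at hu₁
            subst hu₁
            exact ⟨[a], ⟨a, linH ch, [], rfl, rfl, PendH.base ch⟩,
              ⟨[], [], by simp [linH_nil, ← hw], rfl⟩⟩
        | y :: w₁ =>
            simp only [List.cons_append, List.cons.injEq] at hw
            exact absurd (List.append_eq_nil_iff.mp hw.2.symm).2 hv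

lemma TSound {u v : List (σ ⊕ σ)} {s : List σ} (hp : TPend u s) (hc : TCloses s v) :
    ∃ t : UTree σ, u ++ v = t.lin := by
  obtain ⟨a, u₁, s₁, rfl, rfl, hp₁⟩ := hp
  obtain ⟨w, rfl, hw⟩ := TCloses_destruct hc
  obtain ⟨hh, hhh⟩ := HSound hp₁ w hw
  exact ⟨UTree.node a hh, by simp [lin_node, ← hhh]⟩

open Classical in
noncomputable def parse : List (σ ⊕ σ) → List σ → Option (List σ)
  | [], s => some s
  | Sum.inl a :: w, s => parse w (a :: s)
  | Sum.inr _ :: _, [] => none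
  | Sum.inr a :: w, b :: s => if a = b then parse w s else none

lemma parse_append : ∀ (u v : List (σ ⊕ σ)) (s : List σ),
    parse (u ++ v) s = (parse u s).bind fun s' => parse v s' := by
  intro u
  induction u with
  | nil => intro v s; simp [parse]
  | cons x u ih =>
      intro v s
      match x, s with
      | Sum.inl a, s => rw [List.cons_append, parse, parse, ih]
      | Sum.inr a, [] => rw [List.cons_append, parse, parse]; rfl
      | Sum.inr a, b :: s =>
          rw [List.cons_append, parse, parse]
          split
          · exact ih v s
          · rfl

lemma parse_linH : ∀ (n : ℕ) (h : List (UTree σ)), sizeOf h ≤ n → ∀ s,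
    parse (linH h) s = some s := by
  intro n
  induction n using Nat.strong_induction_on with
  | _ n ih =>
    intro h hh s
    match h with
    | [] => rw [linH_nil]; rfl
    | (UTree.node a ch) :: h' =>
        have h1 : sizeOf ch < n := by
          have := hh
          simp only [List.cons.sizeOf_spec, UTree.node.sizeOf_spec] at this
          omega
        have h2 : sizeOf h' < n := by
          have := hh
          simp only [List.cons.sizeOf_spec, UTree.node.sizeOf_spec] at this
          omega
        rw [linH_cons, lin_node, parse_append]
        rw [show Sum.inl a :: (linH ch ++ [Sum.inr a]) =
          (Sum.inl a :: linH ch) ++ [Sum.inr a] from by simp, parse_append]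
        rw [show (Sum.inl a :: linH ch : List (σ ⊕ σ)) = [Sum.inl a] ++ linH ch from rfl,
          parse_append]
        have e1 : parse [Sum.inl a] s = some (a :: s) := rfl
        rw [e1]
        simp only [Option.bind_some]
        rw [ih (sizeOf ch) h1 ch le_rfl (a :: s)]
        simp only [Option.bind_some]
        have e2 : parse [Sum.inr a] (a :: s) = some s := by
          rw [parse, if_pos rfl]
          rfl
        rw [e2]
        simp only [Option.bind_some]
        exact ih (sizeOf h') h2 h' le_rfl s

lemma parse_lin (t : UTree σ) (s : List σ) : parse t.lin s = some s := by
  have := parse_linH (sizeOf [t]) [t] le_rfl s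
  simpa [linH_cons, linH_nil] using this

lemma parse_PendH {u : List (σ ⊕ σ)} {s : List σ} (hp : PendH u s) :
    ∀ s₀, parse u s₀ = some (s ++ s₀) := by
  induction hp with
  | base h => intro s₀; exact parse_linH (sizeOf h) h le_rfl s₀
  | push u₀ s b h hp ih =>
      intro s₀
      rw [parse_append, ih s₀]
      simp only [Option.bind_some]
      rw [show (Sum.inl b :: linH h : List (σ ⊕ σ)) = [Sum.inl b] ++ linH h from rfl,
        parse_append]
      have e1 : parse [Sum.inl b] (s ++ s₀) = some (b :: (s ++ s₀)) := rfl
      rw [e1]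
      simp only [Option.bind_some]
      rw [parse_linH (sizeOf h) h le_rfl]
      simp

lemma parse_TPend {u : List (σ ⊕ σ)} {s : List σ} (hp : TPend u s) :
    parse u [] = some s := by
  obtain ⟨a, u₁, s₁, rfl, rfl, hp₁⟩ := hp
  show parse u₁ [a] = some (s₁ ++ [a])
  exact parse_PendH hp₁ [a]

lemma TPend_absorb {u : List (σ ⊕ σ)} {s : List σ} (hp : TPend u s) (h : List (UTree σ)) :
    TPend (u ++ linH h) s := by
  obtain ⟨a, u₁, s₁, rfl, rfl, hp₁⟩ := hp
  exact ⟨a, u₁ ++ linH h, s₁, by simp, rfl, PendH_absorb hp₁ h⟩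

lemma cont_iff {u : List (σ ⊕ σ)} (hu : u ≠ []) (hpre : ProperPrefix u)
    (h : List (UTree σ)) (v : List (σ ⊕ σ)) :
    (∃ t : UTree σ, (u ++ linH h) ++ v = t.lin) ↔ (∃ t : UTree σ, u ++ v = t.lin) := by
  obtain ⟨t₀, v₀, hv₀, he⟩ := hpre
  obtain ⟨s, hps, _⟩ := TComplete he hu hv₀
  have hsne : s ≠ [] := by obtain ⟨a, u₁, s₁, _, rfl, _⟩ := hps; simp
  have hps' : TPend (u ++ linH h) s := TPend_absorb hps h
  constructor
  · rintro ⟨t, ht⟩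
    have hvne : v ≠ [] := by
      rintro rfl
      rw [List.append_nil] at ht
      have := parse_TPend hps'
      rw [ht, parse_lin] at this
      exact hsne (Option.some_injective _ this).symm
    obtain ⟨s₂, hp₂, hc₂⟩ := TComplete ht (by simp [hu]) hvne
    have : s₂ = s := by
      have e1 := parse_TPend hp₂
      have e2 := parse_TPend hps'
      rw [e1] at e2
      exact Option.some_injective _ e2
    exact TSound hps (this ▸ hc₂)
  · rintro ⟨t, ht⟩
    have hvne : v ≠ [] := by
      rintro rfl
      rw [List.append_nil] at ht
      have := parse_TPend hps
      rw [ht, parse_lin] at this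
      exact hsne (Option.some_injective _ this).symm
    obtain ⟨s₂, hp₂, hc₂⟩ := TComplete ht hu hvne
    have := TSound (TPend_absorb hp₂ h) hc₂
    simpa using this

end Aux

/-- Lemma 10: `Safe(u[h]) = Safe(u)` and `LSafe(u[h]) = LSafe(u)`
for every hedge `h`. -/
theorem safe_invariant_by_hedge {σ Q Γ : Type} [Fintype σ] [Fintype Q] [Fintype Γ]
    (A : VPA σ Q Γ) (u : List (σ ⊕ σ)) (hu : u ≠ []) (hpre : ProperPrefix u)
    (h : List (UTree σ)) :
    Safe A (u ++ linH h) = Safe A u ∧ LSafe A (u ++ linH h) = LSafe A u := by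
  have key : ∀ v, (∃ t : UTree σ, (u ++ linH h) ++ v = t.lin) ↔ ∃ t : UTree σ, u ++ v = t.lin :=
    Aux.cont_iff hu hpre h
  constructor
  · ext C
    simp only [Safe, Set.mem_setOf_eq]
    constructor
    · intro H v hv
      exact H v ((key v).mpr hv)
    · intro H v hv
      exact H v ((key v).mp hv)
  · ext C
    simp only [LSafe, Set.mem_setOf_eq]
    constructor
    · intro H b v' hv
      exact H b v' ((key (Sum.inr b :: v')).mpr hv)
    · intro H b v' hv
      exact H b v' ((key (Sum.inr b :: v')).mp hv)
end

section
/- Let A be a VPA over Σ and u a nonempty proper prefix of the linearization of some tree. Then ⌊Safe(u)⌋ and ⌊LSafe(u)⌋ are finite, and every set of configurations they contain is finite; in fact every C ∈ ⌊Safe(u)⌋ (and every C ∈ ⌊LSafe(u)⌋) satisfies C ⊆ Q × Γ^k where k is the number of unmatched open letters of u. -/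
/-- Balance count: number of opening minus closing tags, as an integer. -/
def cnt {σ : Type} (w : List (σ ⊕ σ)) : ℤ :=
  (w.countP Sum.isLeft : ℤ) - (w.countP Sum.isRight : ℤ)

lemma cnt_append {σ : Type} (a b : List (σ ⊕ σ)) : cnt (a ++ b) = cnt a + cnt b := by
  simp [cnt, List.countP_append]; ring

lemma cnt_flatten {σ : Type} (L : List (List (σ ⊕ σ))) :
    cnt L.flatten = (L.map cnt).sum := by
  induction L with
  | nil => simp [cnt]
  | cons a L ih => simp [List.flatten_cons, cnt_append, ih]

lemma cnt_lin {σ : Type} : ∀ t : UTree σ, cnt t.lin = 0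
  | .node a ts => by
    rw [UTree.lin, show (Sum.inl a :: ((ts.attach.map fun x => UTree.lin x.1).flatten
        ++ [Sum.inr a]) : List (σ ⊕ σ)) =
        [Sum.inl a] ++ ((ts.attach.map fun x => UTree.lin x.1).flatten ++ [Sum.inr a]) from rfl,
      cnt_append, cnt_append, cnt_flatten]
    have h : ∀ z ∈ (ts.attach.map fun x => UTree.lin x.1).map cnt, z = 0 := by
      intro z hz
      simp only [List.map_map, List.mem_map] at hz
      obtain ⟨x, -, rfl⟩ := hz
      exact cnt_lin x.1
    rw [List.sum_eq_zero h]
    simp [cnt]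
decreasing_by simp only [UTree.node.sizeOf_spec]; have := List.sizeOf_lt_of_mem x.2; omega

lemma cnt_linH {σ : Type} (h : List (UTree σ)) : cnt (linH h) = 0 := by
  rw [linH, cnt_flatten, List.sum_eq_zero]
  intro z hz
  simp only [List.map_map, List.mem_map] at hz
  obtain ⟨x, -, rfl⟩ := hz
  exact cnt_lin x

lemma steps_length {σ Q Γ : Type} (A : VPA σ Q Γ) :
    ∀ (v : List (σ ⊕ σ)) (c c' : Q × List Γ), A.Steps c v c' →
      (c'.2.length : ℤ) = (c.2.length : ℤ) + cnt v
  | [], c, c', h => by cases h; simp [cnt]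
  | x :: w, c, c'', h => by
    obtain ⟨c', hs, hrest⟩ := h
    have ih := steps_length A w c' c'' hrest
    cases x with
    | inl a =>
      obtain ⟨γ, -, h2⟩ := hs
      rw [ih, h2]
      simp [cnt, List.countP_cons]
      ring
    | inr a =>
      obtain ⟨γ, -, h2⟩ := hs
      rw [ih, h2]
      simp [cnt, List.countP_cons]
      ring

lemma cnt_u {σ : Type} (l : List (σ × List (UTree σ))) :
    cnt ((l.map fun p => Sum.inl p.1 :: linH p.2).flatten : List (σ ⊕ σ)) = l.length := by
  rw [cnt_flatten]
  induction l with
  | nil => simp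
  | cons p l ih =>
    simp only [List.map_cons, List.sum_cons, ih]
    rw [show (Sum.inl p.1 :: linH p.2 : List (σ ⊕ σ)) = [Sum.inl p.1] ++ linH p.2 from rfl,
      cnt_append, cnt_linH]
    simp [cnt]
    ring

/-- Any configuration that can complete a continuation of `u` to a tree
linearization (ending with empty stack) has stack length `k`. -/
lemma key_len {σ Q Γ : Type} (A : VPA σ Q Γ) (u v : List (σ ⊕ σ)) (k : ℕ)
    (l : List (σ × List (UTree σ)))
    (hfac : u = (l.map fun p => Sum.inl p.1 :: linH p.2).flatten)
    (hk : k = l.length)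
    (ht : ∃ t : UTree σ, u ++ v = t.lin)
    (c : Q × List Γ) (p : Q) (hs : A.Steps c v (p, [])) : c.2.length = k := by
  obtain ⟨t, ht⟩ := ht
  have h1 : cnt u + cnt v = 0 := by rw [← cnt_append, ht, cnt_lin]
  have h2 : cnt u = (k : ℤ) := by rw [hfac, cnt_u, hk]
  have h3 := steps_length A v c (p, []) hs
  simp only [List.length_nil, Nat.cast_zero] at h3
  omega

/-- Proposition 7: for `u` a nonempty proper prefix of some
linearization, factorized as `u = a₁[h₁]⋯a_k[h_k]` (so `k` is the number of
unmatched open letters of `u`), the antichains `⌊Safe(u)⌋` and `⌊LSafe(u)⌋` are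
finite, all their elements are finite sets of configurations, and every such
element is included in `Q × Γ^k`. -/
theorem mins_safe_finite {σ Q Γ : Type} [Fintype σ] [Fintype Q] [Fintype Γ]
    (A : VPA σ Q Γ) (u : List (σ ⊕ σ)) (k : ℕ)
    (l : List (σ × List (UTree σ)))
    (hfac : u = (l.map fun p => Sum.inl p.1 :: linH p.2).flatten)
    (hk : k = l.length)
    (hu : u ≠ []) (hpre : ProperPrefix u) :
    (mins (Safe A u)).Finite ∧ (mins (LSafe A u)).Finite ∧
    (∀ C ∈ mins (Safe A u),
      C.Finite ∧ C ⊆ {c : Q × List Γ | c.2.length = k}) ∧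
    (∀ C ∈ mins (LSafe A u),
      C.Finite ∧ C ⊆ {c : Q × List Γ | c.2.length = k}) := by
  set S : Set (Q × List Γ) := {c : Q × List Γ | c.2.length = k} with hS
  have hSfin : S.Finite := by
    have h1 : {L : List Γ | L.length = k}.Finite := List.finite_length_eq Γ k
    have : S ⊆ (Set.univ : Set Q) ×ˢ {L : List Γ | L.length = k} := by
      intro c hc; exact ⟨trivial, hc⟩
    exact Set.Finite.subset (Set.finite_univ.prod h1) this
  have hsub1 : ∀ C ∈ mins (Safe A u), C ⊆ S := by
    rintro C ⟨hC, hmin⟩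
    have hCS : C ∩ S ∈ Safe A u := by
      intro v hv
      obtain ⟨c, hcC, p, hp, hs⟩ := hC v hv
      exact ⟨c, ⟨hcC, key_len A u v k l hfac hk hv c p hs⟩, p, hp, hs⟩
    have := hmin (C ∩ S) hCS Set.inter_subset_left
    rw [← this]
    exact Set.inter_subset_right
  have hsub2 : ∀ C ∈ mins (LSafe A u), C ⊆ S := by
    rintro C ⟨hC, hmin⟩
    have hCS : C ∩ S ∈ LSafe A u := by
      intro b v' hv
      obtain ⟨c, hcC, p, hp, hs⟩ := hC b v' hv
      exact ⟨c, ⟨hcC, key_len A u (Sum.inr b :: v') k l hfac hk hv c p hs⟩, p, hp, hs⟩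
    have := hmin (C ∩ S) hCS Set.inter_subset_left
    rw [← this]
    exact Set.inter_subset_right
  refine ⟨?_, ?_, ?_, ?_⟩
  · exact Set.Finite.subset hSfin.finite_subsets (fun C hC => hsub1 C hC)
  · exact Set.Finite.subset hSfin.finite_subsets (fun C hC => hsub2 C hC)
  · exact fun C hC => ⟨hSfin.subset (hsub1 C hC), hsub1 C hC⟩
  · exact fun C hC => ⟨hSfin.subset (hsub2 C hC), hsub2 C hC⟩
end
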